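/- Let G be a simple graph and u a pendant vertex (vertex of degree 1) of G. Then there exists a minimum-weight Italian dominating function f of G with f(u) ≠ 2. -/

import Mathlib

open SimpleGraph Finset
open scoped Classical

/-- An Italian dominating function: values in {0,1,2}, and every vertex with
value 0 has neighbor values summing to at least 2. -/
def IsItalian {V : Type*} [Fintype V] (G : SimpleGraph V) (f : V → ℕ) : Prop :=
  (∀ v, f v ≤ 2) ∧
    ∀ v, f v = 0 → 2 ≤ ∑ u ∈ Finset.univ.filter (fun w => G.Adj v w), f u

/-- The Italian domination number: minimum weight of an Italian dominating function. -/
noncomputable def italianDomNumber {V : Type*} [Fintype V] (G : SimpleGraph V) : ℕ :=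
  sInf {w | ∃ f : V → ℕ, IsItalian G f ∧ ∑ v, f v = w}

/-- The corona `G ⊙ K₁`: attach one pendant vertex (an `inr` copy) to each vertex of `G`. -/
def coronaK1 {V : Type*} (G : SimpleGraph V) : SimpleGraph (V ⊕ V) :=
  SimpleGraph.fromRel (fun a b =>
    match a, b with
    | Sum.inl u, Sum.inl v => G.Adj u v
    | Sum.inl u, Sum.inr v => u = v
    | Sum.inr u, Sum.inl v => u = v
    | Sum.inr _, Sum.inr _ => False)

/-- The corona `G ⊙ H`: one copy of `H` per vertex of `G`, each joined to that vertex. -/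
def corona {V W : Type*} (G : SimpleGraph V) (H : SimpleGraph W) :
    SimpleGraph (V ⊕ V × W) :=
  SimpleGraph.fromRel (fun a b =>
    match a, b with
    | Sum.inl u, Sum.inl v => G.Adj u v
    | Sum.inl u, Sum.inr p => u = p.1
    | Sum.inr p, Sum.inl v => p.1 = v
    | Sum.inr p, Sum.inr q => p.1 = q.1 ∧ H.Adj p.2 q.2)

theorem pendant_vertex_idf {V : Type*} [Fintype V] (G : SimpleGraph V) (u : V)
    (hu : G.degree u = 1) :
    ∃ f : V → ℕ, IsItalian G f ∧ (∑ v, f v) = italianDomNumber G ∧ f u ≠ 2 := by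
  -- the set of weights is nonempty
  have hne : {w | ∃ f : V → ℕ, IsItalian G f ∧ ∑ v, f v = w}.Nonempty := by
    refine ⟨∑ _v : V, 2, fun _ => 2, ⟨⟨fun v => le_refl 2, fun v hv => by simp at hv⟩, rfl⟩⟩
  obtain ⟨f, hf, hsum⟩ := Nat.sInf_mem hne
  by_cases hfu : f u = 2
  swap
  · exact ⟨f, hf, hsum, hfu⟩
  -- get the unique neighbor w of u
  obtain ⟨w, hw⟩ := Finset.card_eq_one.mp hu
  have hadj : G.Adj u w := by
    have : w ∈ G.neighborFinset u := by rw [hw]; exact Finset.mem_singleton_self w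
    rwa [SimpleGraph.mem_neighborFinset] at this
  have huw : u ≠ w := fun h => G.loopless.irrefl u (h ▸ hadj)
  set g : V → ℕ := fun v => if v = u then 0 else if v = w then 2 else f v with hg
  have hgu : g u = 0 := by simp [hg]
  have hgw : g w = 2 := by simp [hg, huw.symm]
  -- the neighbor filter of u is {w}
  have hfilt : Finset.univ.filter (fun x => G.Adj u x) = {w} := by
    rw [← hw]; ext x; simp [SimpleGraph.mem_neighborFinset]
  -- any neighbor of v ≠ u, w is not u
  have hnotu : ∀ v, v ≠ w → ∀ x, G.Adj v x → x ≠ u := by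
    intro v hvw x hvx hxu
    apply hvw
    have hvu : G.Adj v u := hxu ▸ hvx
    have : v ∈ G.neighborFinset u := by
      rw [SimpleGraph.mem_neighborFinset]; exact hvu.symm
    rwa [hw, Finset.mem_singleton] at this
  have hgI : IsItalian G g := by
    constructor
    · intro v
      by_cases h1 : v = u
      · simp [hg, h1]
      by_cases h2 : v = w
      · rw [h2, hgw]
      · simpa [hg, h1, h2] using hf.1 v
    · intro v hv
      by_cases h1 : v = u
      · subst h1
        rw [hfilt, Finset.sum_singleton, hgw]
      by_cases h2 : v = w
      · exfalso; rw [h2, hgw] at hv; exact two_ne_zero hv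
      · have hfv : f v = 0 := by simpa [hg, h1, h2] using hv
        have h2f := hf.2 v hfv
        refine le_trans h2f (Finset.sum_le_sum ?_)
        intro x hx
        rw [Finset.mem_filter] at hx
        have hxu : x ≠ u := hnotu v h2 x hx.2
        by_cases hxw : x = w
        · rw [hxw, hgw]; exact hf.1 w
        · simp [hg, hxu, hxw]
  -- weight comparison: ∑ g + f w = ∑ f
  have hsplit : ∀ h : V → ℕ,
      ∑ v, h v = h u + (h w + ∑ v ∈ (Finset.univ.erase u).erase w, h v) := by
    intro h
    rw [← Finset.add_sum_erase _ h (Finset.mem_univ u),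
        ← Finset.add_sum_erase _ h (Finset.mem_erase.mpr ⟨huw.symm, Finset.mem_univ w⟩)]
  have heq : ∀ v ∈ (Finset.univ.erase u).erase w, g v = f v := by
    intro v hv
    rw [Finset.mem_erase, Finset.mem_erase] at hv
    simp [hg, hv.1, hv.2.1]
  have hwt : ∑ v, g v + f w = ∑ v, f v := by
    rw [hsplit g, hsplit f, Finset.sum_congr rfl heq, hgu, hgw, hfu]
    ring
  have hle : ∑ v, g v ≤ italianDomNumber G := by
    unfold italianDomNumber
    rw [← hsum, ← hwt]; exact Nat.le_add_right _ _
  have hge : italianDomNumber G ≤ ∑ v, g v := by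
    unfold italianDomNumber
    exact Nat.sInf_le ⟨g, hgI, rfl⟩
  exact ⟨g, hgI, le_antisymm hle hge, by rw [hgu]; exact fun h => by simp at h⟩
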